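/- arXiv:2505.24210 — 3 statements merged into one kernel-verified Lean document; each statement's English description precedes it below -/
import Mathlib

section
/- For every integer s ≥ 2, the RKG2 stability polynomial R_s satisfies the second-order consistency conditions R_s(0) = 1, R_s'(0) = 1, and R_s''(0) = 1. -/
/-- The Gegenbauer polynomials with parameter 3/2:
`C_0(x) = 1`, `C_1(x) = 3x`, and
`C_j(x) = ((2j+1)/j)·x·C_{j-1}(x) − ((j+1)/j)·C_{j-2}(x)` for `j ≥ 2`. -/
noncomputable def gegenbauer : ℕ → ℝ → ℝ
  | 0, _ => 1
  | 1, x => 3 * x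
  | (j + 2), x =>
      (2 * ((j : ℝ) + 2) + 1) / ((j : ℝ) + 2) * x * gegenbauer (j + 1) x
        - (((j : ℝ) + 2) + 1) / ((j : ℝ) + 2) * gegenbauer j x

/-- The RKG2 coefficient `b_j = 4(j−1)(j+4)/(3j(j+1)(j+2)(j+3))`. -/
noncomputable def rkg2B (j : ℕ) : ℝ :=
  4 * ((j : ℝ) - 1) * ((j : ℝ) + 4) /
    (3 * (j : ℝ) * ((j : ℝ) + 1) * ((j : ℝ) + 2) * ((j : ℝ) + 3))

/-- The RKG2 coefficient `a_j = 1 − ((j+1)(j+2)/2)·b_j`. -/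
noncomputable def rkg2A (j : ℕ) : ℝ :=
  1 - ((j : ℝ) + 1) * ((j : ℝ) + 2) / 2 * rkg2B j

/-- The RKG2 parameter `w_1 = 6/((s+4)(s−1))`. -/
noncomputable def rkg2W (s : ℕ) : ℝ := 6 / (((s : ℝ) + 4) * ((s : ℝ) - 1))

/-- The RKG2 stability polynomial `R_j(z) = a_j + b_j·C_j(1 + w_1·z)` where `w_1` is built from
the stage number `s`. -/
noncomputable def rkg2R (s j : ℕ) (z : ℝ) : ℝ :=
  rkg2A j + rkg2B j * gegenbauer j (1 + rkg2W s * z)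

open Polynomial

/-- Polynomial version of the Gegenbauer polynomials with parameter 3/2. -/
noncomputable def gegP : ℕ → Polynomial ℝ
  | 0 => 1
  | 1 => C 3 * X
  | (j + 2) =>
      C ((2 * ((j : ℝ) + 2) + 1) / ((j : ℝ) + 2)) * X * gegP (j + 1)
        - C ((((j : ℝ) + 2) + 1) / ((j : ℝ) + 2)) * gegP j

lemma gegenbauer_eq (j : ℕ) (x : ℝ) : gegenbauer j x = (gegP j).eval x := by
  induction j using Nat.twoStepInduction with
  | zero => simp [gegenbauer, gegP]
  | one => simp [gegenbauer, gegP]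
  | more n ih1 ih2 => simp [gegenbauer, gegP, ih1, ih2]

lemma eval0 (j : ℕ) : (gegP j).eval 1 = ((j:ℝ)+1)*((j:ℝ)+2)/2 := by
  induction j using Nat.twoStepInduction with
  | zero => simp [gegP]
  | one => simp [gegP]; norm_num
  | more n ih1 ih2 =>
    have h : ((n:ℝ)+2) ≠ 0 := by positivity
    have e : 1 + n = n + 1 := Nat.add_comm 1 n
    simp only [gegP, e, eval_sub, eval_mul, eval_C, eval_X, ih1, ih2]
    push_cast
    field_simp
    ring

lemma eval1 (j : ℕ) : (gegP j).derivative.eval 1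
    = (j:ℝ)*((j:ℝ)+1)*((j:ℝ)+2)*((j:ℝ)+3)/8 := by
  induction j using Nat.twoStepInduction with
  | zero => simp [gegP]
  | one => simp [gegP]; norm_num
  | more n ih1 ih2 =>
    have h : ((n:ℝ)+2) ≠ 0 := by positivity
    have e : 1 + n = n + 1 := Nat.add_comm 1 n
    simp only [gegP, e, derivative_sub, derivative_add, derivative_mul, derivative_C, derivative_X,
      eval_sub, eval_mul, eval_add, eval_C, eval_X, ih1, ih2, eval0,
      zero_mul, mul_zero, one_mul, mul_one, zero_add, add_zero, eval_zero, eval_one]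
    push_cast
    field_simp
    ring

lemma eval2 (j : ℕ) : (gegP j).derivative.derivative.eval 1
    = ((j:ℝ)-1)*(j:ℝ)*((j:ℝ)+1)*((j:ℝ)+2)*((j:ℝ)+3)*((j:ℝ)+4)/48 := by
  induction j using Nat.twoStepInduction with
  | zero => simp [gegP]
  | one => simp [gegP]
  | more n ih1 ih2 =>
    have h : ((n:ℝ)+2) ≠ 0 := by positivity
    have e : 1 + n = n + 1 := Nat.add_comm 1 n
    simp only [gegP, e, derivative_sub, derivative_add, derivative_mul, derivative_C, derivative_X,
      eval_sub, eval_mul, eval_add, eval_C, eval_X, ih1, ih2, eval0, eval1,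
      zero_mul, mul_zero, one_mul, mul_one, zero_add, add_zero, eval_zero, eval_one]
    push_cast
    field_simp
    ring

lemma derivAux (p : Polynomial ℝ) (a b w : ℝ) :
    deriv (fun z => a + b * p.eval (1 + w*z))
      = fun z => 0 + (b * w) * p.derivative.eval (1 + w*z) := by
  funext z
  have h1 : HasDerivAt (fun z : ℝ => 1 + w*z) w z := by
    simpa using ((hasDerivAt_id z).const_mul w).const_add 1
  have h2 := ((p.hasDerivAt (1 + w*z)).comp z h1)
  have h3 := (h2.const_mul b).const_add a
  simp only [Function.comp_def] at h3
  rw [h3.deriv]; ring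

/-- For every integer `s ≥ 2`, the RKG2 stability polynomial `R_s` satisfies the second-order
consistency conditions `R_s(0) = 1`, `R_s'(0) = 1`, and `R_s''(0) = 1`. -/
theorem rkg2_second_order_consistency (s : ℕ) (hs : 2 ≤ s) :
    rkg2R s s 0 = 1 ∧ deriv (rkg2R s s) 0 = 1 ∧ deriv (deriv (rkg2R s s)) 0 = 1 := by
  have hs2 : (2:ℝ) ≤ (s:ℝ) := by exact_mod_cast hs
  have hR : rkg2R s s = fun z => rkg2A s + rkg2B s * (gegP s).eval (1 + rkg2W s * z) := by
    funext z; rw [rkg2R, gegenbauer_eq]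
  have hd1 : deriv (rkg2R s s)
      = fun z => 0 + (rkg2B s * rkg2W s) * (gegP s).derivative.eval (1 + rkg2W s * z) := by
    rw [hR, derivAux]
  have hd2 : deriv (deriv (rkg2R s s))
      = fun z => 0 + (rkg2B s * rkg2W s * rkg2W s)
          * (gegP s).derivative.derivative.eval (1 + rkg2W s * z) := by
    rw [hd1, derivAux]
  have hns : (s:ℝ) ≠ 0 := by linarith
  have hn1 : (s:ℝ) + 1 ≠ 0 := by linarith
  have hn2 : (s:ℝ) + 2 ≠ 0 := by linarith
  have hn3 : (s:ℝ) + 3 ≠ 0 := by linarith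
  have hn4 : (s:ℝ) + 4 ≠ 0 := by linarith
  have hm1 : (s:ℝ) - 1 ≠ 0 := by intro h; nlinarith
  refine ⟨?_, ?_, ?_⟩
  · rw [hR]
    simp only [mul_zero, add_zero, eval0, rkg2A]
    ring
  · rw [hd1]
    simp only [mul_zero, add_zero, eval1, rkg2B, rkg2W]
    field_simp
    ring
  · rw [hd2]
    simp only [mul_zero, add_zero, eval2, rkg2B, rkg2W]
    field_simp
    ring
end

section
/- Fix an integer s ≥ 2. For every integer j with 4 ≤ j ≤ s and every real z, the RKG2 stability polynomials satisfy the three-term recurrence underlying the Runge–Kutta formulation of RKG2: R_j(z) = μ_j·R_{j−1}(z) + ν_j·R_{j−2}(z) + (1 − μ_j − ν_j) + μ̃_j·z·R_{j−1}(z) + γ̃_j·z, where μ_j = ((2j+1)/j)·(b_j/b_{j−1}), μ̃_j = μ_j·w_1, ν_j = −((j+1)/j)·(b_j/b_{j−2}), and γ̃_j = −μ̃_j·a_{j−1}. -/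
/-- The RKG2 recurrence coefficient `μ_j = ((2j+1)/j)·(b_j/b_{j−1})`. -/
noncomputable def rkg2Mu (j : ℕ) : ℝ :=
  (2 * (j : ℝ) + 1) / (j : ℝ) * (rkg2B j / rkg2B (j - 1))

/-- The RKG2 recurrence coefficient `μ̃_j = μ_j·w_1`. -/
noncomputable def rkg2MuTilde (s j : ℕ) : ℝ := rkg2Mu j * rkg2W s

/-- The RKG2 recurrence coefficient `ν_j = −((j+1)/j)·(b_j/b_{j−2})`. -/
noncomputable def rkg2Nu (j : ℕ) : ℝ :=
  -(((j : ℝ) + 1) / (j : ℝ) * (rkg2B j / rkg2B (j - 2)))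

/-- The RKG2 recurrence coefficient `γ̃_j = −μ̃_j·a_{j−1}`. -/
noncomputable def rkg2GammaTilde (s j : ℕ) : ℝ := -(rkg2MuTilde s j * rkg2A (j - 1))

set_option maxHeartbeats 1000000 in
/-- Fix an integer `s ≥ 2`. For every integer `j` with `4 ≤ j ≤ s` and every real `z`,
the RKG2 stability polynomials satisfy the three-term recurrence underlying the Runge–Kutta
formulation of RKG2:
`R_j(z) = μ_j·R_{j−1}(z) + ν_j·R_{j−2}(z) + (1 − μ_j − ν_j) + μ̃_j·z·R_{j−1}(z) + γ̃_j·z`. -/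
theorem rkg2_three_term_recurrence (s : ℕ) (hs : 2 ≤ s) (j : ℕ) (hj₁ : 4 ≤ j) (hj₂ : j ≤ s)
    (z : ℝ) :
    rkg2R s j z =
      rkg2Mu j * rkg2R s (j - 1) z + rkg2Nu j * rkg2R s (j - 2) z
        + (1 - rkg2Mu j - rkg2Nu j) + rkg2MuTilde s j * z * rkg2R s (j - 1) z
        + rkg2GammaTilde s j * z := by
  obtain ⟨k, rfl⟩ : ∃ k, j = k + 4 := ⟨j - 4, by omega⟩
  have h1 : k + 4 - 1 = k + 3 := rfl
  have h2 : k + 4 - 2 = k + 2 := rfl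
  have e0 : (k : ℝ) + 1 ≠ 0 := by positivity
  have e1 : (k : ℝ) + 2 ≠ 0 := by positivity
  have e2 : (k : ℝ) + 3 ≠ 0 := by positivity
  have e3 : (k : ℝ) + 4 ≠ 0 := by positivity
  have e4 : (k : ℝ) + 5 ≠ 0 := by positivity
  have e5 : (k : ℝ) + 6 ≠ 0 := by positivity
  have e6 : (k : ℝ) + 7 ≠ 0 := by positivity
  have e7 : (k : ℝ) + 8 ≠ 0 := by positivity
  have hb2 : rkg2B (k + 2) = 4 * ((k : ℝ) + 1) * ((k : ℝ) + 6) /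
      (3 * ((k : ℝ) + 2) * ((k : ℝ) + 3) * ((k : ℝ) + 4) * ((k : ℝ) + 5)) := by
    simp only [rkg2B]; push_cast; ring
  have hb3 : rkg2B (k + 3) = 4 * ((k : ℝ) + 2) * ((k : ℝ) + 7) /
      (3 * ((k : ℝ) + 3) * ((k : ℝ) + 4) * ((k : ℝ) + 5) * ((k : ℝ) + 6)) := by
    simp only [rkg2B]; push_cast; ring
  have hb4 : rkg2B (k + 4) = 4 * ((k : ℝ) + 3) * ((k : ℝ) + 8) /
      (3 * ((k : ℝ) + 4) * ((k : ℝ) + 5) * ((k : ℝ) + 6) * ((k : ℝ) + 7)) := by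
    simp only [rkg2B]; push_cast; ring
  have hmu : rkg2Mu (k + 4) * rkg2B (k + 3) =
      (2 * ((k : ℝ) + 4) + 1) / ((k : ℝ) + 4) * rkg2B (k + 4) := by
    simp only [rkg2Mu, h1, hb3, hb4]
    push_cast
    field_simp
  have hnu : rkg2Nu (k + 4) * rkg2B (k + 2) =
      -((((k : ℝ) + 4) + 1) / ((k : ℝ) + 4)) * rkg2B (k + 4) := by
    simp only [rkg2Nu, h2, hb2, hb4]
    push_cast
    field_simp
  have ha : rkg2A (k + 4) =
      rkg2Mu (k + 4) * rkg2A (k + 3) + rkg2Nu (k + 4) * rkg2A (k + 2)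
        + (1 - rkg2Mu (k + 4) - rkg2Nu (k + 4)) := by
    simp only [rkg2Mu, rkg2Nu, rkg2A, h1, h2, hb2, hb3, hb4]
    push_cast
    field_simp
    ring
  set w := rkg2W s with hw
  have hg : gegenbauer (k + 4) (1 + w * z) =
      (2 * ((k : ℝ) + 4) + 1) / ((k : ℝ) + 4) * (1 + w * z) *
        gegenbauer (k + 3) (1 + w * z)
      - ((((k : ℝ) + 4) + 1) / ((k : ℝ) + 4)) * gegenbauer (k + 2) (1 + w * z) := by
    show ((2 : ℝ) * (((k + 2 : ℕ) : ℝ) + 2) + 1) / (((k + 2 : ℕ) : ℝ) + 2) * (1 + w * z) *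
        gegenbauer (k + 3) (1 + w * z)
      - ((((k + 2 : ℕ) : ℝ) + 2) + 1) / (((k + 2 : ℕ) : ℝ) + 2) *
        gegenbauer (k + 2) (1 + w * z) = _
    push_cast
    ring
  simp only [rkg2R, rkg2MuTilde, rkg2GammaTilde, h1, h2, hg, ← hw]
  set c1 := gegenbauer (k + 3) (1 + w * z)
  set c2 := gegenbauer (k + 2) (1 + w * z)
  linear_combination ha - (1 + w * z) * c1 * hmu - c2 * hnu
end

section
/- For every integer s ≥ 2 and every real z such that −1 ≤ 1 + w_1·z ≤ 1, the RKG2 stability polynomial satisfies |R_s(z)| ≤ 1; that is, the region of absolute stability of the s-stage RKG2 method contains all real z with 1 + w_1·z ∈ [−1, 1]. -/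
noncomputable def gB : ℕ → ℝ
  | 0 => 1
  | (k + 1) => (2 * (k : ℝ) + 3) / (2 * (k : ℝ) + 2) * gB k

lemma gB_succ (m : ℕ) : gB (m + 1) = (2 * (m : ℝ) + 3) / (2 * (m : ℝ) + 2) * gB m := by
  rw [gB]

lemma gB_pos : ∀ k, 0 < gB k
  | 0 => by norm_num [gB]
  | (k + 1) => by
      have := gB_pos k
      rw [gB]
      have h : (0:ℝ) < 2 * (k:ℝ) + 2 := by positivity
      positivity

noncomputable def gc (n k : ℕ) : ℝ := if k ≤ n then gB k * gB (n - k) else 0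

lemma gc_nonneg (n k : ℕ) : 0 ≤ gc n k := by
  unfold gc; split
  · exact le_of_lt (mul_pos (gB_pos _) (gB_pos _))
  · exact le_refl 0

lemma gc_zero (n k : ℕ) (h : n < k) : gc n k = 0 := by
  unfold gc; rw [if_neg (by omega)]

lemma coeff_id (n k : ℕ) :
    gc (n + 2) k
      = (2 * ((n : ℝ) + 2) + 1) / ((n : ℝ) + 2)
          * ((gc (n + 1) k + (if k = 0 then 0 else gc (n + 1) (k - 1))) / 2)
        - (((n : ℝ) + 2) + 1) / ((n : ℝ) + 2) * (if k = 0 then 0 else gc n (k - 1)) := by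
  have hn2 : ((n:ℝ) + 2) ≠ 0 := by positivity
  rcases k with _ | m
  · simp only [if_pos rfl, add_zero, mul_zero, sub_zero]
    unfold gc
    rw [if_pos (by omega), if_pos (by omega), Nat.sub_zero, Nat.sub_zero,
      show n + 2 = (n + 1) + 1 from rfl, gB_succ (n + 1)]
    push_cast
    field_simp
    ring
  · simp only [Nat.succ_ne_zero, if_false, Nat.add_sub_cancel]
    rcases Nat.lt_or_ge m (n + 1) with hm | hm
    · -- generic case m ≤ n
      obtain ⟨j, rfl⟩ : ∃ j, n = m + j := ⟨n - m, by omega⟩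
      have e1 : gc (m + j + 2) (m + 1) = gB (m + 1) * gB (j + 1) := by
        unfold gc; rw [if_pos (by omega), show m + j + 2 - (m + 1) = j + 1 by omega]
      have e2 : gc (m + j + 1) (m + 1) = gB (m + 1) * gB j := by
        unfold gc; rw [if_pos (by omega), show m + j + 1 - (m + 1) = j by omega]
      have e3 : gc (m + j + 1) m = gB m * gB (j + 1) := by
        unfold gc; rw [if_pos (by omega), show m + j + 1 - m = j + 1 by omega]
      have e4 : gc (m + j) m = gB m * gB j := by
        unfold gc; rw [if_pos (by omega), show m + j - m = j by omega]
      rw [e1, e2, e3, e4, gB_succ m, gB_succ j]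
      have h1 : (2 * (m:ℝ) + 2) ≠ 0 := by positivity
      have h2 : (2 * (j:ℝ) + 2) ≠ 0 := by positivity
      have h3 : ((m:ℝ) + (j:ℝ) + 2) ≠ 0 := by positivity
      push_cast at hn2 ⊢
      field_simp
      ring
    · rcases Nat.lt_or_ge m (n + 2) with hm2 | hm2
      · -- m = n + 1
        obtain rfl : m = n + 1 := by omega
        have e1 : gc (n + 2) (n + 2) = gB (n + 2) * gB 0 := by
          unfold gc; rw [if_pos (by omega), Nat.sub_self]
        have e2 : gc (n + 1) (n + 2) = 0 := gc_zero _ _ (by omega)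
        have e3 : gc (n + 1) (n + 1) = gB (n + 1) * gB 0 := by
          unfold gc; rw [if_pos (by omega), Nat.sub_self]
        have e4 : gc n (n + 1) = 0 := gc_zero _ _ (by omega)
        rw [e1, e2, e3, e4, show n + 2 = (n + 1) + 1 from rfl, gB_succ (n + 1)]
        push_cast
        field_simp
        ring
      · -- m ≥ n + 2 : everything vanishes
        rw [gc_zero _ _ (by omega), gc_zero _ _ (by omega), gc_zero _ _ (by omega),
          gc_zero _ _ (by omega)]
        ring

lemma geg0 (x : ℝ) : gegenbauer 0 x = 1 := rfl
lemma geg1 (x : ℝ) : gegenbauer 1 x = 3 * x := rfl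
lemma geg2 (j : ℕ) (x : ℝ) : gegenbauer (j + 2) x =
      (2 * ((j : ℝ) + 2) + 1) / ((j : ℝ) + 2) * x * gegenbauer (j + 1) x
        - (((j : ℝ) + 2) + 1) / ((j : ℝ) + 2) * gegenbauer j x := rfl

lemma sum_ext (n N : ℕ) (h : n + 1 ≤ N) (f : ℕ → ℝ) :
    ∑ k ∈ Finset.range (n + 1), gc n k * f k = ∑ k ∈ Finset.range N, gc n k * f k := by
  apply Finset.sum_subset (Finset.range_subset_range.mpr h)
  intro x hx hx'
  rw [gc_zero n x (by simp at hx'; omega), zero_mul]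

lemma sum_shift (f : ℕ → ℝ) (N : ℕ) (a θ : ℝ) :
    ∑ k ∈ Finset.range N, f k * Real.cos ((a - 2 * ((k : ℝ) + 1)) * θ)
      = ∑ k ∈ Finset.range (N + 1),
          (if k = 0 then 0 else f (k - 1)) * Real.cos ((a - 2 * (k : ℝ)) * θ) := by
  rw [Finset.sum_range_succ']
  push_cast
  simp

lemma geg_cos (n : ℕ) (θ : ℝ) :
    gegenbauer n (Real.cos θ) =
      ∑ k ∈ Finset.range (n + 1), gc n k * Real.cos (((n : ℝ) - 2 * k) * θ) := by
  induction n using Nat.twoStepInduction with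
  | zero =>
      simp [geg0, gc, gB]
  | one =>
      rw [geg1, Finset.sum_range_succ, Finset.sum_range_succ, Finset.sum_range_zero]
      rw [show gc 1 0 = gB 0 * gB 1 by unfold gc; norm_num,
        show gc 1 1 = gB 1 * gB 0 by unfold gc; norm_num]
      norm_num [gB]
      ring
  | more n ih1 ih2 =>
      have E1 : gegenbauer (n + 1) (Real.cos θ) =
          ∑ k ∈ Finset.range (n + 3), gc (n + 1) k * Real.cos (((n : ℝ) + 1 - 2 * k) * θ) := by
        rw [ih2, sum_ext (n + 1) (n + 3) (by omega)]
        push_cast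
        rfl
      have E0 : gegenbauer n (Real.cos θ) =
          ∑ k ∈ Finset.range (n + 3), gc n k * Real.cos (((n : ℝ) - 2 * k) * θ) := by
        rw [ih1, sum_ext n (n + 3) (by omega)]
      rw [geg2, E1, E0, mul_assoc]
      have A : Real.cos θ *
            (∑ k ∈ Finset.range (n + 3), gc (n + 1) k * Real.cos (((n : ℝ) + 1 - 2 * k) * θ))
          = (∑ k ∈ Finset.range (n + 3), gc (n + 1) k * Real.cos (((n : ℝ) + 2 - 2 * k) * θ)
             + ∑ k ∈ Finset.range (n + 3), gc (n + 1) k * Real.cos (((n : ℝ) - 2 * k) * θ)) / 2 := by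
        rw [Finset.mul_sum, ← Finset.sum_add_distrib, Finset.sum_div]
        apply Finset.sum_congr rfl
        intro k _
        rw [show ((n : ℝ) + 2 - 2 * k) * θ = θ + ((n : ℝ) + 1 - 2 * k) * θ by ring,
          show ((n : ℝ) - 2 * k) * θ = -(θ - ((n : ℝ) + 1 - 2 * k) * θ) by ring,
          Real.cos_neg, Real.cos_add, Real.cos_sub]
        ring
      have B1 : ∑ k ∈ Finset.range (n + 3), gc (n + 1) k * Real.cos (((n : ℝ) - 2 * k) * θ)
          = ∑ k ∈ Finset.range (n + 4),
              (if k = 0 then 0 else gc (n + 1) (k - 1)) * Real.cos (((n : ℝ) + 2 - 2 * k) * θ) := by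
        rw [← sum_shift (fun k => gc (n + 1) k) (n + 3) ((n : ℝ) + 2) θ]
        apply Finset.sum_congr rfl
        intro k _
        rw [show ((n : ℝ) - 2 * k) * θ = ((n : ℝ) + 2 - 2 * ((k : ℝ) + 1)) * θ by ring]
      have B0 : ∑ k ∈ Finset.range (n + 3), gc n k * Real.cos (((n : ℝ) - 2 * k) * θ)
          = ∑ k ∈ Finset.range (n + 4),
              (if k = 0 then 0 else gc n (k - 1)) * Real.cos (((n : ℝ) + 2 - 2 * k) * θ) := by
        rw [← sum_shift (fun k => gc n k) (n + 3) ((n : ℝ) + 2) θ]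
        apply Finset.sum_congr rfl
        intro k _
        rw [show ((n : ℝ) - 2 * k) * θ = ((n : ℝ) + 2 - 2 * ((k : ℝ) + 1)) * θ by ring]
      rw [A, B1, B0]
      have SA : ∑ k ∈ Finset.range (n + 3), gc (n + 1) k * Real.cos (((n : ℝ) + 2 - 2 * k) * θ)
          = ∑ k ∈ Finset.range (n + 4), gc (n + 1) k * Real.cos (((n : ℝ) + 2 - 2 * k) * θ) := by
        rw [← sum_ext (n + 1) (n + 3) (by omega), sum_ext (n + 1) (n + 4) (by omega)]
      -- final assembly
      have goalsum : ∑ k ∈ Finset.range (n + 2 + 1), gc (n + 2) k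
            * Real.cos ((((n + 2 : ℕ) : ℝ) - 2 * k) * θ)
          = ∑ k ∈ Finset.range (n + 4), gc (n + 2) k * Real.cos (((n : ℝ) + 2 - 2 * k) * θ) := by
        rw [sum_ext (n + 2) (n + 4) (by omega)]
        push_cast
        rfl
      rw [goalsum, SA]
      apply Eq.symm
      calc ∑ k ∈ Finset.range (n + 4), gc (n + 2) k * Real.cos (((n : ℝ) + 2 - 2 * k) * θ)
          = ∑ k ∈ Finset.range (n + 4),
              ((2 * ((n : ℝ) + 2) + 1) / ((n : ℝ) + 2) *
                ((gc (n + 1) k * Real.cos (((n : ℝ) + 2 - 2 * k) * θ)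
                  + (if k = 0 then 0 else gc (n + 1) (k - 1))
                      * Real.cos (((n : ℝ) + 2 - 2 * k) * θ)) / 2)
               - (((n : ℝ) + 2) + 1) / ((n : ℝ) + 2) *
                  ((if k = 0 then 0 else gc n (k - 1))
                      * Real.cos (((n : ℝ) + 2 - 2 * k) * θ))) := by
            apply Finset.sum_congr rfl
            intro k _
            rw [coeff_id]
            ring
        _ = _ := by
            rw [Finset.sum_sub_distrib]
            congr 1
            · rw [← Finset.mul_sum]
              congr 1
              rw [← Finset.sum_div]
              congr 1
              rw [← Finset.sum_add_distrib]
            · rw [← Finset.mul_sum]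

lemma geg_one (n : ℕ) : gegenbauer n 1 = ((n : ℝ) + 1) * ((n : ℝ) + 2) / 2 := by
  induction n using Nat.twoStepInduction with
  | zero => norm_num [geg0]
  | one => norm_num [geg1]
  | more n ih1 ih2 =>
      rw [geg2, ih1, ih2]
      have hn2 : ((n:ℝ) + 2) ≠ 0 := by positivity
      push_cast
      field_simp
      ring

lemma gc_sum (n : ℕ) : ∑ k ∈ Finset.range (n + 1), gc n k = ((n : ℝ) + 1) * ((n : ℝ) + 2) / 2 := by
  have h := geg_cos n 0
  simp only [mul_zero, Real.cos_zero, mul_one] at h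
  rw [← h, geg_one]

lemma geg_bound (n : ℕ) (x : ℝ) (h1 : -1 ≤ x) (h2 : x ≤ 1) :
    |gegenbauer n x| ≤ ((n : ℝ) + 1) * ((n : ℝ) + 2) / 2 := by
  have hx : Real.cos (Real.arccos x) = x := Real.cos_arccos h1 h2
  rw [← hx, geg_cos]
  calc |∑ k ∈ Finset.range (n + 1), gc n k * Real.cos (((n : ℝ) - 2 * k) * Real.arccos x)|
      ≤ ∑ k ∈ Finset.range (n + 1), |gc n k * Real.cos (((n : ℝ) - 2 * k) * Real.arccos x)| :=
        Finset.abs_sum_le_sum_abs _ _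
    _ ≤ ∑ k ∈ Finset.range (n + 1), gc n k := by
        apply Finset.sum_le_sum
        intro k _
        rw [abs_mul, abs_of_nonneg (gc_nonneg n k)]
        calc gc n k * |Real.cos (((n : ℝ) - 2 * k) * Real.arccos x)|
            ≤ gc n k * 1 := by
              apply mul_le_mul_of_nonneg_left (Real.abs_cos_le_one _) (gc_nonneg n k)
          _ = gc n k := mul_one _
    _ = ((n : ℝ) + 1) * ((n : ℝ) + 2) / 2 := gc_sum n

/-- For every integer `s ≥ 2` and every real `z` such that `−1 ≤ 1 + w_1·z ≤ 1`, the RKG2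
stability polynomial satisfies `|R_s(z)| ≤ 1`. -/
theorem rkg2_absolute_stability (s : ℕ) (hs : 2 ≤ s) (z : ℝ)
    (h₁ : -1 ≤ 1 + rkg2W s * z) (h₂ : 1 + rkg2W s * z ≤ 1) :
    |rkg2R s s z| ≤ 1 := by
  have hs' : (2:ℝ) ≤ (s : ℝ) := by exact_mod_cast hs
  have hu0 : (0:ℝ) < (s : ℝ) := by linarith
  have hd : (0:ℝ) < 3 * (s:ℝ) * ((s:ℝ) + 1) * ((s:ℝ) + 2) * ((s:ℝ) + 3) := by
    have h3 : (0:ℝ) < 3 * (s:ℝ) := by linarith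
    exact mul_pos (mul_pos (mul_pos h3 (by linarith)) (by linarith)) (by linarith)
  have hb : 0 ≤ rkg2B s := by
    unfold rkg2B
    apply div_nonneg
    · nlinarith
    · exact hd.le
  have ha : 0 ≤ rkg2A s := by
    unfold rkg2A rkg2B
    rw [sub_nonneg, div_mul_div_comm, div_le_one (by linarith)]
    nlinarith [mul_nonneg (mul_nonneg (by linarith : (0:ℝ) ≤ (s:ℝ) + 1) (by linarith : (0:ℝ) ≤ (s:ℝ) + 2))
      (by nlinarith : (0:ℝ) ≤ 2 * (s:ℝ) ^ 2 + 6 * (s:ℝ) + 16)]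
  have hkey : rkg2A s + rkg2B s * (((s:ℝ) + 1) * ((s:ℝ) + 2) / 2) = 1 := by
    unfold rkg2A; ring
  have hC : |gegenbauer s (1 + rkg2W s * z)| ≤ ((s:ℝ) + 1) * ((s:ℝ) + 2) / 2 :=
    geg_bound s _ h₁ h₂
  calc |rkg2R s s z| = |rkg2A s + rkg2B s * gegenbauer s (1 + rkg2W s * z)| := rfl
    _ ≤ |rkg2A s| + |rkg2B s * gegenbauer s (1 + rkg2W s * z)| := abs_add_le _ _
    _ = rkg2A s + rkg2B s * |gegenbauer s (1 + rkg2W s * z)| := by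
        rw [abs_of_nonneg ha, abs_mul, abs_of_nonneg hb]
    _ ≤ rkg2A s + rkg2B s * (((s:ℝ) + 1) * ((s:ℝ) + 2) / 2) := by
        have := mul_le_mul_of_nonneg_left hC hb
        linarith
    _ = 1 := hkey
end
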